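/- Let T and U be non-singular linear maps on ℝ² and 0 ≤ α ≤ 2. Then Φ^α(TU) ≥ Φ̲^α(T) Φ^α(U). -/

import Mathlib

open scoped ENNReal Topology

noncomputable section

namespace CodeTreeFractal

/-- The first (largest) singular value of a linear map on `ℝ²`: the operator norm. -/
def sv1 (T : EuclideanSpace ℝ (Fin 2) →L[ℝ] EuclideanSpace ℝ (Fin 2)) : ℝ := ‖T‖

/-- The second (smallest) singular value of a linear map on `ℝ²`: the minimum of
`‖T v‖` over unit vectors `v`. -/
def sv2 (T : EuclideanSpace ℝ (Fin 2) →L[ℝ] EuclideanSpace ℝ (Fin 2)) : ℝ :=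
  sInf {s : ℝ | ∃ v : EuclideanSpace ℝ (Fin 2), ‖v‖ = 1 ∧ s = ‖T v‖}

/-- The singular value function `Φ^α` on `ℝ²`, for `0 ≤ α ≤ 2`. -/
def Phi2 (T : EuclideanSpace ℝ (Fin 2) →L[ℝ] EuclideanSpace ℝ (Fin 2)) (α : ℝ) : ℝ :=
  if α ≤ 1 then sv1 T ^ α else sv1 T * sv2 T ^ (α - 1)

/-- The lower singular value function `Φ̲^α` on `ℝ²`, for `0 ≤ α ≤ 2`. -/
def PhiLow2 (T : EuclideanSpace ℝ (Fin 2) →L[ℝ] EuclideanSpace ℝ (Fin 2)) (α : ℝ) : ℝ :=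
  if α ≤ 1 then sv2 T ^ α else sv2 T * sv1 T ^ (α - 1)

abbrev EE := EuclideanSpace ℝ (Fin 2)

lemma unit_exists : ∃ v : EE, ‖v‖ = 1 :=
  ⟨EuclideanSpace.single 0 1, by simp⟩

lemma set_nonempty (T : EE →L[ℝ] EE) :
    {s : ℝ | ∃ v : EE, ‖v‖ = 1 ∧ s = ‖T v‖}.Nonempty := by
  obtain ⟨v, hv⟩ := unit_exists
  exact ⟨‖T v‖, v, hv, rfl⟩

lemma set_bdd (T : EE →L[ℝ] EE) :
    BddBelow {s : ℝ | ∃ v : EE, ‖v‖ = 1 ∧ s = ‖T v‖} :=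
  ⟨0, by rintro s ⟨v, hv, rfl⟩; positivity⟩

lemma sv2_le (T : EE →L[ℝ] EE) {v : EE} (hv : ‖v‖ = 1) : sv2 T ≤ ‖T v‖ :=
  csInf_le (set_bdd T) ⟨v, hv, rfl⟩

lemma le_sv2 (T : EE →L[ℝ] EE) {c : ℝ} (h : ∀ v : EE, ‖v‖ = 1 → c ≤ ‖T v‖) :
    c ≤ sv2 T :=
  le_csInf (set_nonempty T) (by rintro s ⟨v, hv, rfl⟩; exact h v hv)

lemma sv2_nonneg (T : EE →L[ℝ] EE) : 0 ≤ sv2 T :=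
  le_sv2 T (fun v _ => norm_nonneg _)

lemma sv2_mul_norm_le (T : EE →L[ℝ] EE) (x : EE) : sv2 T * ‖x‖ ≤ ‖T x‖ := by
  rcases eq_or_ne x 0 with rfl | hx
  · simp
  · have hxn : ‖x‖ ≠ 0 := norm_ne_zero_iff.mpr hx
    have hv : ‖(‖x‖⁻¹ • x : EE)‖ = 1 := by
      rw [norm_smul, norm_inv, norm_norm, inv_mul_cancel₀ hxn]
    have := sv2_le T hv
    rw [_root_.map_smul, norm_smul, norm_inv, norm_norm] at this
    have hxp : (0:ℝ) < ‖x‖ := (norm_nonneg x).lt_of_ne' hxn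
    calc sv2 T * ‖x‖ ≤ (‖x‖⁻¹ * ‖T x‖) * ‖x‖ := by nlinarith
    _ = ‖T x‖ := by field_simp

lemma exists_min (T : EE →L[ℝ] EE) : ∃ v : EE, ‖v‖ = 1 ∧ ‖T v‖ = sv2 T := by
  obtain ⟨u, hu⟩ := unit_exists
  have hu' : u ∈ Metric.sphere (0:EE) 1 := by simpa using hu
  obtain ⟨v, hv, hmin⟩ := (isCompact_sphere (0:EE) 1).exists_isMinOn ⟨u, hu'⟩
    (Continuous.continuousOn (by continuity : Continuous fun w : EE => ‖T w‖))
  have hv1 : ‖v‖ = 1 := by simpa using hv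
  refine ⟨v, hv1, le_antisymm ?_ (sv2_le T hv1)⟩
  exact le_sv2 T (fun w hw => hmin (by simpa using hw))

lemma exists_max (T : EE →L[ℝ] EE) : ∃ v : EE, ‖v‖ = 1 ∧ ‖T v‖ = ‖T‖ := by
  obtain ⟨u, hu⟩ := unit_exists
  have hu' : u ∈ Metric.sphere (0:EE) 1 := by simpa using hu
  obtain ⟨v, hv, hmax⟩ := (isCompact_sphere (0:EE) 1).exists_isMaxOn ⟨u, hu'⟩
    (Continuous.continuousOn (by continuity : Continuous fun w : EE => ‖T w‖))
  have hv1 : ‖v‖ = 1 := by simpa using hv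
  refine ⟨v, hv1, le_antisymm (by simpa [hv1] using T.le_opNorm v) ?_⟩
  refine T.opNorm_le_bound (norm_nonneg _) (fun x => ?_)
  rcases eq_or_ne x 0 with rfl | hx
  · simp
  · have hxn : ‖x‖ ≠ 0 := norm_ne_zero_iff.mpr hx
    have hxp : (0:ℝ) < ‖x‖ := (norm_nonneg x).lt_of_ne' hxn
    have hw : ‖(‖x‖⁻¹ • x : EE)‖ = 1 := by
      rw [norm_smul, norm_inv, norm_norm, inv_mul_cancel₀ hxn]
    have h2 : ‖T (‖x‖⁻¹ • x)‖ ≤ ‖T v‖ := hmax (by simpa using hw)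
    rw [_root_.map_smul, norm_smul, norm_inv, norm_norm] at h2
    calc ‖T x‖ = (‖x‖⁻¹ * ‖T x‖) * ‖x‖ := by field_simp
      _ ≤ ‖T v‖ * ‖x‖ := by nlinarith

lemma sv2_pos (T : EE →L[ℝ] EE) (hT : Function.Injective T) : 0 < sv2 T := by
  obtain ⟨v, hv1, hveq⟩ := exists_min T
  rw [← hveq]
  have : v ≠ 0 := fun h => by simp [h] at hv1
  have : T v ≠ 0 := fun h => this (hT (by simpa using h))
  exact norm_pos_iff.mpr this

lemma sv1_pos (T : EE →L[ℝ] EE) (hT : Function.Injective T) : 0 < ‖T‖ := by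
  obtain ⟨v, hv1, hveq⟩ := exists_min T
  have h2 := sv2_pos T hT
  linarith [sv2_le T hv1, (by simpa [hv1] using T.le_opNorm v : ‖T v‖ ≤ ‖T‖)]

lemma sv2_comp (T U : EE →L[ℝ] EE) : sv2 T * sv2 U ≤ sv2 (T.comp U) := by
  refine le_sv2 _ (fun v hv => ?_)
  calc sv2 T * sv2 U = sv2 T * (sv2 U * ‖v‖) := by rw [hv, mul_one]
    _ ≤ sv2 T * ‖U v‖ := by
        have := sv2_mul_norm_le U v
        nlinarith [sv2_nonneg T]
    _ ≤ ‖T (U v)‖ := sv2_mul_norm_le T (U v)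
    _ = ‖(T.comp U) v‖ := rfl

lemma sv1_comp_lower (T U : EE →L[ℝ] EE) : sv2 T * ‖U‖ ≤ ‖T.comp U‖ := by
  obtain ⟨v, hv1, hveq⟩ := exists_max U
  calc sv2 T * ‖U‖ = sv2 T * ‖U v‖ := by rw [hveq]
    _ ≤ ‖T (U v)‖ := sv2_mul_norm_le T (U v)
    _ = ‖(T.comp U) v‖ := rfl
    _ ≤ ‖T.comp U‖ := by simpa [hv1] using (T.comp U).le_opNorm v

/-! ### Determinant -/

open Matrix

def mtx (T : EE →L[ℝ] EE) : Matrix (Fin 2) (Fin 2) ℝ :=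
  (toEuclideanCLM (𝕜 := ℝ) (n := Fin 2)).symm T

def dd (T : EE →L[ℝ] EE) : ℝ := |(mtx T).det|

lemma mtx_apply (T : EE →L[ℝ] EE) : toEuclideanCLM (𝕜 := ℝ) (mtx T) = T := by
  simp [mtx]

lemma dd_comp (T U : EE →L[ℝ] EE) : dd (T.comp U) = dd T * dd U := by
  have : mtx (T.comp U) = mtx T * mtx U := by
    have : T.comp U = T * U := rfl
    rw [mtx, mtx, mtx, this, _root_.map_mul]
  rw [dd, dd, dd, this, Matrix.det_mul, abs_mul]

def JJ : Matrix (Fin 2) (Fin 2) ℝ := !![0,-1;1,0]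
def JJ' : Matrix (Fin 2) (Fin 2) ℝ := !![0,1;-1,0]

lemma JJ_mul_JJ' : JJ * JJ' = 1 := by
  ext i j
  fin_cases i <;> fin_cases j <;>
    simp [JJ, JJ', Matrix.mul_apply, Fin.sum_univ_two, Matrix.one_apply]

lemma JJ'_mul_JJ : JJ' * JJ = 1 := by
  ext i j
  fin_cases i <;> fin_cases j <;>
    simp [JJ, JJ', Matrix.mul_apply, Fin.sum_univ_two, Matrix.one_apply]

lemma adjugate_eq (M : Matrix (Fin 2) (Fin 2) ℝ) :
    M.adjugate = JJ * (star M) * JJ' := by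
  rw [Matrix.adjugate_fin_two]
  ext i j
  fin_cases i <;> fin_cases j <;>
    simp [JJ, JJ', Matrix.mul_apply, Matrix.vecMul, dotProduct,
      Fin.sum_univ_two, Matrix.star_apply]

lemma norm_JJ_apply (x : EE) : ‖toEuclideanCLM (𝕜 := ℝ) JJ x‖ = ‖x‖ := by
  have h0 : (toEuclideanCLM (𝕜 := ℝ) JJ x) 0 = -(x 1) := by
    show JJ.mulVec (⇑x) 0 = _
    simp [JJ, Matrix.mulVec, dotProduct, Fin.sum_univ_two]
  have h1 : (toEuclideanCLM (𝕜 := ℝ) JJ x) 1 = x 0 := by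
    show JJ.mulVec (⇑x) 1 = _
    simp [JJ, Matrix.mulVec, dotProduct, Fin.sum_univ_two]
  rw [EuclideanSpace.norm_eq, EuclideanSpace.norm_eq, Fin.sum_univ_two, Fin.sum_univ_two,
    h0, h1, norm_neg, add_comm]

lemma norm_JJ'_apply (x : EE) : ‖toEuclideanCLM (𝕜 := ℝ) JJ' x‖ = ‖x‖ := by
  have h0 : (toEuclideanCLM (𝕜 := ℝ) JJ' x) 0 = x 1 := by
    show JJ'.mulVec (⇑x) 0 = _
    simp [JJ', Matrix.mulVec, dotProduct, Fin.sum_univ_two]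
  have h1 : (toEuclideanCLM (𝕜 := ℝ) JJ' x) 1 = -(x 0) := by
    show JJ'.mulVec (⇑x) 1 = _
    simp [JJ', Matrix.mulVec, dotProduct, Fin.sum_univ_two]
  rw [EuclideanSpace.norm_eq, EuclideanSpace.norm_eq, Fin.sum_univ_two, Fin.sum_univ_two,
    h0, h1, norm_neg, add_comm]

lemma norm_conj (N : Matrix (Fin 2) (Fin 2) ℝ) :
    ‖toEuclideanCLM (𝕜 := ℝ) (JJ * N * JJ')‖ = ‖toEuclideanCLM (𝕜 := ℝ) N‖ := by
  set A := toEuclideanCLM (𝕜 := ℝ) N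
  set P := toEuclideanCLM (𝕜 := ℝ) JJ
  set Q := toEuclideanCLM (𝕜 := ℝ) JJ'
  have hPAQ : toEuclideanCLM (𝕜 := ℝ) (JJ * N * JJ') = P * A * Q := by
    rw [_root_.map_mul, _root_.map_mul]
  rw [hPAQ]
  apply le_antisymm
  · refine ContinuousLinearMap.opNorm_le_bound _ (norm_nonneg A) (fun x => ?_)
    calc ‖(P * A * Q) x‖ = ‖P (A (Q x))‖ := rfl
      _ = ‖A (Q x)‖ := norm_JJ_apply _
      _ ≤ ‖A‖ * ‖Q x‖ := A.le_opNorm _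
      _ = ‖A‖ * ‖x‖ := by rw [norm_JJ'_apply]
  · refine ContinuousLinearMap.opNorm_le_bound _ (norm_nonneg _) (fun x => ?_)
    have key : A x = Q ((P * A * Q) (P x)) := by
      have : (Q * (P * A * Q) * P) = A := by
        have h1 : Q * (P * A * Q) * P = (Q * P) * A * (Q * P) := by
          simp only [mul_assoc]
        rw [h1, ← _root_.map_mul, JJ'_mul_JJ, _root_.map_one, one_mul, mul_one]
      calc A x = (Q * (P * A * Q) * P) x := by rw [this]
        _ = Q ((P * A * Q) (P x)) := rfl
    calc ‖A x‖ = ‖Q ((P * A * Q) (P x))‖ := by rw [key]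
      _ = ‖(P * A * Q) (P x)‖ := norm_JJ'_apply _
      _ ≤ ‖P * A * Q‖ * ‖P x‖ := (P * A * Q).le_opNorm _
      _ = ‖P * A * Q‖ * ‖x‖ := by rw [norm_JJ_apply]

lemma norm_adjugate (M : Matrix (Fin 2) (Fin 2) ℝ) :
    ‖toEuclideanCLM (𝕜 := ℝ) M.adjugate‖ = ‖toEuclideanCLM (𝕜 := ℝ) M‖ := by
  rw [adjugate_eq, norm_conj, map_star, ContinuousLinearMap.star_eq_adjoint]
  exact LinearIsometryEquiv.norm_map ContinuousLinearMap.adjoint _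

lemma sv_prod (T : EE →L[ℝ] EE) (hT : Function.Injective T) :
    ‖T‖ * sv2 T = dd T := by
  set M := mtx T with hM
  set B := toEuclideanCLM (𝕜 := ℝ) M.adjugate with hB
  have hBnorm : ‖B‖ = ‖T‖ := by rw [hB, norm_adjugate, mtx_apply]
  have hdet : M.det ≠ 0 := by
    intro h
    obtain ⟨v, hv0, hveq⟩ := (Matrix.exists_mulVec_eq_zero_iff).mpr h
    have hTv : T ((WithLp.equiv 2 _).symm v) = 0 := by
      rw [← mtx_apply T, ← hM]
      have : toEuclideanCLM (𝕜 := ℝ) M ((WithLp.equiv 2 _).symm v) = (WithLp.equiv 2 _).symm (M *ᵥ v) :=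
        Matrix.toEuclideanCLM_toLp M v
      rw [this]
      simp [Matrix.toLin'_apply, hveq]
    have := hT (by simpa using hTv : T ((WithLp.equiv 2 _).symm v) = T 0)
    exact hv0 (by simpa using this)
  have hTB : T.comp (B : EE →L[ℝ] EE) = M.det • (1 : EE →L[ℝ] EE) := by
    have : T * B = toEuclideanCLM (𝕜 := ℝ) (M * M.adjugate) := by
      rw [_root_.map_mul, mtx_apply]
    have h2 : T * B = toEuclideanCLM (𝕜 := ℝ) (M.det • (1 : Matrix (Fin 2) (Fin 2) ℝ)) := by
      rw [this, Matrix.mul_adjugate]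
    rw [show T.comp B = T * B from rfl, h2, _root_.map_smul, _root_.map_one]
  have hBT : B.comp T = M.det • (1 : EE →L[ℝ] EE) := by
    have h2 : B * T = toEuclideanCLM (𝕜 := ℝ) (M.det • (1 : Matrix (Fin 2) (Fin 2) ℝ)) := by
      rw [show B * T = toEuclideanCLM (𝕜 := ℝ) (M.adjugate * M) by rw [_root_.map_mul, mtx_apply],
        Matrix.adjugate_mul]
    rw [show B.comp T = B * T from rfl, h2, _root_.map_smul, _root_.map_one]
  have hT1 : (0:ℝ) < ‖T‖ := sv1_pos T hT
  -- lower bound : dd T / ‖T‖ ≤ sv2 T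
  have hlow : dd T ≤ ‖T‖ * sv2 T := by
    have : dd T / ‖T‖ ≤ sv2 T := by
      refine le_sv2 T (fun v hv => ?_)
      -- v = B ((det)⁻¹ • T v)
      have hv' : B ((M.det)⁻¹ • T v) = v := by
        have : B (T v) = M.det • v := by
          have := congrArg (fun (S : EE →L[ℝ] EE) => S v) hBT
          simpa using this
        rw [_root_.map_smul, this, smul_smul, inv_mul_cancel₀ hdet, one_smul]
      have hnv : ‖v‖ ≤ ‖B‖ * ‖(M.det)⁻¹ • T v‖ := by
        conv_lhs => rw [← hv']
        exact B.le_opNorm _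
      rw [hv, norm_smul, norm_inv, Real.norm_eq_abs, hBnorm] at hnv
      rw [div_le_iff₀ hT1] at *
      have habs : (0:ℝ) < |M.det| := abs_pos.mpr hdet
      rw [dd, ← hM]
      calc |M.det| = |M.det| * 1 := by ring
        _ ≤ |M.det| * (‖T‖ * (|M.det|⁻¹ * ‖T v‖)) := by
            nlinarith
        _ = ‖T v‖ * ‖T‖ := by field_simp
      
    calc dd T = (dd T / ‖T‖) * ‖T‖ := by field_simp
      _ ≤ sv2 T * ‖T‖ := by nlinarith
      _ = ‖T‖ * sv2 T := by ring
  -- upper bound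
  have hup : ‖T‖ * sv2 T ≤ dd T := by
    obtain ⟨u, hu1, hueq⟩ := exists_max B
    have hv1 : ‖(‖T‖⁻¹ • B u : EE)‖ = 1 := by
      rw [norm_smul, norm_inv, norm_norm, hueq, hBnorm, inv_mul_cancel₀ hT1.ne']
    have hTv : ‖T (‖T‖⁻¹ • B u)‖ = dd T / ‖T‖ := by
      have : T (B u) = M.det • u := by
        have := congrArg (fun (S : EE →L[ℝ] EE) => S u) hTB
        simpa using this
      rw [_root_.map_smul, this, norm_smul, norm_smul, norm_inv, norm_norm,
        Real.norm_eq_abs, hu1, mul_one, dd, ← hM]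
      ring
    have := sv2_le T hv1
    rw [hTv] at this
    calc ‖T‖ * sv2 T ≤ ‖T‖ * (dd T / ‖T‖) := by nlinarith
      _ = dd T := by field_simp
  linarith


/-- Lemma `philowerbound`: for non-singular linear maps `T, U` on `ℝ²` and
`0 ≤ α ≤ 2`, `Φ^α(TU) ≥ Φ̲^α(T) Φ^α(U)`. -/
theorem statement14
    (T U : EuclideanSpace ℝ (Fin 2) →L[ℝ] EuclideanSpace ℝ (Fin 2))
    (hT : Function.Injective T) (hU : Function.Injective U)
    (α : ℝ) (hα0 : 0 ≤ α) (hα2 : α ≤ 2) :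
    PhiLow2 T α * Phi2 U α ≤ Phi2 (T.comp U) α := by
  have hTU : Function.Injective (T.comp U) := by
    rw [ContinuousLinearMap.coe_comp']
    exact hT.comp hU
  have hsv1T : sv1 T = ‖T‖ := rfl
  have ha1 : 0 < sv1 T := sv1_pos T hT
  have ha2 : 0 < sv2 T := sv2_pos T hT
  have hb1 : 0 < sv1 U := sv1_pos U hU
  have hb2 : 0 < sv2 U := sv2_pos U hU
  have hc1 : 0 < sv1 (T.comp U) := sv1_pos _ hTU
  have hc2 : 0 < sv2 (T.comp U) := sv2_pos _ hTU
  set a1 := sv1 T; set a2 := sv2 T; set b1 := sv1 U; set b2 := sv2 U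
  set c1 := sv1 (T.comp U); set c2 := sv2 (T.comp U)
  have hkey : a2 * b1 ≤ c1 := sv1_comp_lower T U
  have hprod : c1 * c2 = (a1 * a2) * (b1 * b2) := by
    have h1 : c1 * c2 = dd (T.comp U) := sv_prod _ hTU
    have h2 : a1 * a2 = dd T := sv_prod T hT
    have h3 : b1 * b2 = dd U := sv_prod U hU
    rw [h1, h2, h3, dd_comp]
  rw [Phi2, Phi2, PhiLow2]
  by_cases hα1 : α ≤ 1
  · simp only [if_pos hα1]
    rw [← Real.mul_rpow ha2.le hb1.le]
    exact Real.rpow_le_rpow (by positivity) hkey hα0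
  · simp only [if_neg hα1]
    push_neg at hα1
    set β := α - 1 with hβ
    have hβ0 : 0 < β := by linarith
    have hβ1 : β ≤ 1 := by linarith
    rw [Real.rpow_def_of_pos ha1, Real.rpow_def_of_pos hb2, Real.rpow_def_of_pos hc2]
    have hlog1 : Real.log a2 + Real.log b1 ≤ Real.log c1 := by
      rw [← Real.log_mul ha2.ne' hb1.ne']
      exact Real.log_le_log (by positivity) hkey
    have hlog2 : Real.log c1 + Real.log c2 =
        Real.log a1 + Real.log a2 + Real.log b1 + Real.log b2 := by
      have := congrArg Real.log hprod
      rw [Real.log_mul hc1.ne' hc2.ne', Real.log_mul (by positivity) (by positivity),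
        Real.log_mul ha1.ne' ha2.ne', Real.log_mul hb1.ne' hb2.ne'] at this
      linarith
    calc a2 * Real.exp (Real.log a1 * β) * (b1 * Real.exp (Real.log b2 * β))
        = Real.exp (Real.log a2 + Real.log a1 * β + (Real.log b1 + Real.log b2 * β)) := by
          rw [Real.exp_add, Real.exp_add, Real.exp_add, Real.exp_log ha2, Real.exp_log hb1]
          try ring
      _ ≤ Real.exp (Real.log c1 + Real.log c2 * β) := by
          apply Real.exp_le_exp.mpr
          nlinarith [mul_nonneg (sub_nonneg.mpr hβ1) (sub_nonneg.mpr hlog1)]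
      _ = c1 * Real.exp (Real.log c2 * β) := by
          rw [Real.exp_add, Real.exp_log hc1]

end CodeTreeFractal
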